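/- arXiv:2410.16318 — 2 statements merged into one kernel-verified Lean document; each statement's English description precedes it below -/
import Mathlib

section
/- Let H be a positive bounded operator on a complex Hilbert space ℋ and let α ≥ 0 be a real number. Then for every n ∈ ℕ, (H^n + α^n·I)^(1/n) ≤ H + α·I in the order on self-adjoint operators. -/
open Filter Topology
open scoped NNReal ENNReal
noncomputable section

variable {H : Type*} [NormedAddCommGroup H] [InnerProductSpace ℂ H] [CompleteSpace H]

/-- The orthogonal projection onto the closure of the range of a bounded operator `T`. -/
def rangeProj (T : H →L[ℂ] H) : H →L[ℂ] H :=
  (LinearMap.range (T : H →ₗ[ℂ] H)).topologicalClosure.subtypeL ∘L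
    Submodule.orthogonalProjectionOnto (LinearMap.range (T : H →ₗ[ℂ] H)).topologicalClosure

/-- The positive `n`-th root of a (positive) operator, via the continuous functional calculus. -/
def nthRoot (T : H →L[ℂ] H) (n : ℕ) : H →L[ℂ] H :=
  CFC.nnrpow T ((n : ℝ≥0)⁻¹)

/-- The absolute value `|T| = (T*T)^(1/2)` of a bounded operator `T`. -/
def opAbs (T : H →L[ℂ] H) : H →L[ℂ] H :=
  CFC.sqrt (ContinuousLinearMap.adjoint T * T)

lemma key_nnreal (t β : ℝ≥0) {n : ℕ} (hn : n ≠ 0) :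
    (t ^ n + β ^ n) ^ ((n : ℝ)⁻¹) ≤ t + β := by
  have h1 : t ^ n + β ^ n ≤ (t + β) ^ n := pow_add_pow_le (by positivity) (by positivity) hn
  calc (t ^ n + β ^ n) ^ ((n : ℝ)⁻¹) ≤ ((t + β) ^ n) ^ ((n : ℝ)⁻¹) :=
        NNReal.rpow_le_rpow h1 (by positivity)
    _ = t + β := by
        rw [← NNReal.rpow_natCast (t + β) n, ← NNReal.rpow_mul,
          mul_inv_cancel₀ (by exact_mod_cast hn), NNReal.rpow_one]

set_option maxHeartbeats 1000000 in
set_option synthInstance.maxHeartbeats 400000 in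
/-- For a positive bounded operator `H₀` and `α ≥ 0`, for every `n`,
`(H₀^n + αⁿ·I)^(1/n) ≤ H₀ + α·I` in the Loewner order. -/
theorem nthRoot_pow_add_le (H₀ : H →L[ℂ] H) (hpos : H₀.IsPositive)
    (α : ℝ) (hα : 0 ≤ α) (n : ℕ) :
    nthRoot (H₀ ^ n + (α ^ n) • (1 : H →L[ℂ] H)) n ≤ H₀ + α • (1 : H →L[ℂ] H) := by
  have h0 : (0 : H →L[ℂ] H) ≤ H₀ := (ContinuousLinearMap.nonneg_iff_isPositive H₀).mpr hpos
  set β : ℝ≥0 := α.toNNReal with hβ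
  have hβα : (β : ℝ) = α := Real.coe_toNNReal α hα
  have hRHS : H₀ + α • (1 : H →L[ℂ] H) = cfc (fun t : ℝ≥0 => t + β) H₀ := by
    have h1 : cfc (fun t : ℝ≥0 => t + β) H₀
        = cfc (fun t : ℝ≥0 => t) H₀ + cfc (fun _ : ℝ≥0 => β) H₀ :=
      cfc_add (a := H₀) (fun t : ℝ≥0 => t) (fun _ => β)
        continuous_id.continuousOn continuous_const.continuousOn
    rw [h1, cfc_id' ℝ≥0 H₀, cfc_const β H₀, Algebra.algebraMap_eq_smul_one,
      NNReal.smul_def, hβα]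
  rcases eq_or_ne n 0 with rfl | hn
  · have hz : nthRoot (H₀ ^ 0 + (α ^ 0) • (1 : H →L[ℂ] H)) 0 = 0 := by
      rw [nthRoot, show ((0 : ℕ) : ℝ≥0)⁻¹ = 0 by simp]
      exact CFC.nnrpow_zero
    rw [hz, hRHS]
    exact cfc_nonneg_of_predicate
  · have hn' : ((n : ℝ≥0)⁻¹ : ℝ≥0) ≠ 0 :=
      inv_ne_zero (by exact_mod_cast hn)
    have hX : H₀ ^ n + (α ^ n) • (1 : H →L[ℂ] H) = cfc (fun t : ℝ≥0 => t ^ n + β ^ n) H₀ := by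
      have h1 : cfc (fun t : ℝ≥0 => t ^ n + β ^ n) H₀
          = cfc (fun t : ℝ≥0 => t ^ n) H₀ + cfc (fun _ : ℝ≥0 => β ^ n) H₀ :=
        cfc_add (a := H₀) (fun t : ℝ≥0 => t ^ n) (fun _ => β ^ n)
          (continuous_pow n).continuousOn continuous_const.continuousOn
      rw [h1, cfc_pow_id H₀ n, cfc_const (β ^ n) H₀, Algebra.algebraMap_eq_smul_one,
        NNReal.smul_def, NNReal.coe_pow, hβα]
    have hcont : Continuous (fun t : ℝ≥0 => NNReal.nnrpow t ((n : ℝ≥0)⁻¹)) :=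
      NNReal.continuous_nnrpow_const _
    have hcomp : cfc (fun t : ℝ≥0 => NNReal.nnrpow (t ^ n + β ^ n) ((n : ℝ≥0)⁻¹)) H₀
        = cfc (fun t : ℝ≥0 => NNReal.nnrpow t ((n : ℝ≥0)⁻¹))
            (cfc (fun t : ℝ≥0 => t ^ n + β ^ n) H₀) :=
      cfc_comp' _ _ H₀ hcont.continuousOn
        (((continuous_pow n).add continuous_const).continuousOn) h0
    have hroot : nthRoot (H₀ ^ n + (α ^ n) • (1 : H →L[ℂ] H)) n =
        cfc (fun t : ℝ≥0 => NNReal.nnrpow (t ^ n + β ^ n) ((n : ℝ≥0)⁻¹)) H₀ := by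
      rw [nthRoot, CFC.nnrpow, hX,
        cfcₙ_eq_cfc hcont.continuousOn
          (by simpa [NNReal.nnrpow] using NNReal.zero_rpow (NNReal.coe_ne_zero.mpr hn')),
        ← hcomp]
    rw [hroot, hRHS]
    refine cfc_mono (fun t _ => ?_)
      ((hcont.comp ((continuous_pow n).add continuous_const)).continuousOn)
      ((continuous_id.add continuous_const).continuousOn)
    have : ((((n : ℝ≥0)⁻¹ : ℝ≥0)) : ℝ) = (n : ℝ)⁻¹ := by push_cast; ring
    simpa [NNReal.nnrpow, this] using key_nnreal t β hn
end
end

section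
/- Let {E_λ}_{λ∈ℝ} be a bounded resolution of the identity on a complex Hilbert space ℋ, and let S be an invertible operator in B(ℋ). Then the family {R(S⁻¹E_λS)}_{λ∈ℝ} is also a bounded resolution of the identity on ℋ. -/
open Filter Topology
open scoped NNReal ENNReal
noncomputable section

variable {H : Type*} [NormedAddCommGroup H] [InnerProductSpace ℂ H] [CompleteSpace H]

/-- A family of orthogonal projections `{E λ}_{λ ∈ ℝ}` is a *resolution of the identity*:
each `E λ` is an orthogonal projection, `⋀ E λ = 0`, `⋁ E λ = I`, the family is monotone
(in the Loewner order), and it is right-continuous, `E λ = ⋀_{λ' > λ} E λ'` (expressed via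
the ranges of the projections). -/
structure IsResolutionOfIdentity (E : ℝ → H →L[ℂ] H) : Prop where
  proj : ∀ l : ℝ, IsSelfAdjoint (E l) ∧ IsIdempotentElem (E l)
  iInf_bot : (⨅ l : ℝ, LinearMap.range (E l : H →ₗ[ℂ] H)) = ⊥
  iSup_top : (⨆ l : ℝ, LinearMap.range (E l : H →ₗ[ℂ] H)).topologicalClosure = ⊤
  mono : Monotone E
  rightCont : ∀ l : ℝ, LinearMap.range (E l : H →ₗ[ℂ] H) = ⨅ l' > l, LinearMap.range (E l' : H →ₗ[ℂ] H)

/-- A resolution of the identity is *bounded* if `E λ = 0` for `λ < −a` and `E λ = I` for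
`λ > a`, for some real `a`. -/
def IsBoundedResolutionOfIdentity (E : ℝ → H →L[ℂ] H) : Prop :=
  IsResolutionOfIdentity E ∧
    ∃ a : ℝ, (∀ l : ℝ, l < -a → E l = 0) ∧ (∀ l : ℝ, a < l → E l = 1)

local notation "⟪" x ", " y "⟫" => @inner ℂ _ _ x y

lemma projOf_isSelfAdjoint (U : Submodule ℂ H) [U.HasOrthogonalProjection] [CompleteSpace U] :
    IsSelfAdjoint (U.subtypeL ∘L Submodule.orthogonalProjectionOnto U) :=
  isSelfAdjoint_starProjection U

lemma projOf_idem (U : Submodule ℂ H) [U.HasOrthogonalProjection] :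
    IsIdempotentElem (U.subtypeL ∘L Submodule.orthogonalProjectionOnto U) := by
  unfold IsIdempotentElem
  ext x
  simp only [ContinuousLinearMap.mul_apply, ContinuousLinearMap.comp_apply,
    Submodule.coe_subtypeL', Submodule.coe_subtype, Submodule.orthogonalProjectionOnto_mem_subspace_eq_self]

lemma range_projOf (U : Submodule ℂ H) [U.HasOrthogonalProjection] :
    LinearMap.range ((U.subtypeL ∘L Submodule.orthogonalProjectionOnto U : H →L[ℂ] H) : H →ₗ[ℂ] H) = U := by
  ext x
  constructor
  · rintro ⟨y, rfl⟩
    exact Submodule.coe_mem _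
  · intro hx
    exact ⟨x, Submodule.starProjection_eq_self_iff.mpr hx⟩

lemma re_inner_projOf (U : Submodule ℂ H) [U.HasOrthogonalProjection] (x : H) :
    RCLike.re ⟪(U.subtypeL ∘L Submodule.orthogonalProjectionOnto U) x, x⟫
      = ‖(Submodule.orthogonalProjectionOnto U x : H)‖ ^ 2 := by
  have h0 : ⟪((Submodule.orthogonalProjectionOnto U x : U) : H), x - ((Submodule.orthogonalProjectionOnto U x : U) : H)⟫ = 0 :=
    (Submodule.mem_orthogonal U _).1 (Submodule.sub_starProjection_mem_orthogonal x) _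
      (Submodule.coe_mem _)
  rw [inner_sub_right] at h0
  have h : ⟪((Submodule.orthogonalProjectionOnto U x : U) : H), x⟫
      = ⟪((Submodule.orthogonalProjectionOnto U x : U) : H), ((Submodule.orthogonalProjectionOnto U x : U) : H)⟫ :=
    sub_eq_zero.mp h0
  simp only [ContinuousLinearMap.comp_apply, Submodule.coe_subtypeL', Submodule.coe_subtype]
  rw [h, inner_self_eq_norm_sq]

lemma projOf_le_projOf {U V : Submodule ℂ H} [CompleteSpace U] [CompleteSpace V]
    (h : U ≤ V) :
    U.subtypeL ∘L Submodule.orthogonalProjectionOnto U ≤ V.subtypeL ∘L Submodule.orthogonalProjectionOnto V := by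
  rw [ContinuousLinearMap.le_def, ContinuousLinearMap.isPositive_def']
  refine ⟨(projOf_isSelfAdjoint V).sub (projOf_isSelfAdjoint U), fun x => ?_⟩
  have hnorm : ‖(Submodule.orthogonalProjectionOnto U x : H)‖ ≤ ‖(Submodule.orthogonalProjectionOnto V x : H)‖ := by
    rw [← Submodule.orthogonalProjectionOnto_starProjection_of_le h x]
    calc ‖(Submodule.orthogonalProjectionOnto U ((Submodule.orthogonalProjectionOnto V x : H)) : H)‖
        ≤ ‖Submodule.orthogonalProjectionOnto U‖ * ‖(Submodule.orthogonalProjectionOnto V x : H)‖ := by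
          simpa using (Submodule.orthogonalProjectionOnto U).le_opNorm ((Submodule.orthogonalProjectionOnto V x : H))
      _ ≤ 1 * ‖(Submodule.orthogonalProjectionOnto V x : H)‖ := by
          gcongr; exact Submodule.orthogonalProjectionOnto_norm_le U
      _ = ‖(Submodule.orthogonalProjectionOnto V x : H)‖ := one_mul _
  have key : ContinuousLinearMap.reApplyInnerSelf
      ((V.subtypeL ∘L Submodule.orthogonalProjectionOnto V) - (U.subtypeL ∘L Submodule.orthogonalProjectionOnto U)) x
      = ‖(Submodule.orthogonalProjectionOnto V x : H)‖ ^ 2 - ‖(Submodule.orthogonalProjectionOnto U x : H)‖ ^ 2 := by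
    rw [ContinuousLinearMap.reApplyInnerSelf_apply, ContinuousLinearMap.sub_apply,
      inner_sub_left, map_sub, re_inner_projOf, re_inner_projOf]
  rw [key]
  have := sq_le_sq' (by linarith [norm_nonneg (Submodule.orthogonalProjectionOnto U x : H)]) hnorm
  linarith

set_option linter.unusedSectionVars false

lemma rangeProj_isSelfAdjoint (T : H →L[ℂ] H) : IsSelfAdjoint (rangeProj T) :=
  projOf_isSelfAdjoint _

lemma rangeProj_idem (T : H →L[ℂ] H) : IsIdempotentElem (rangeProj T) :=
  projOf_idem _

lemma range_rangeProj (T : H →L[ℂ] H) :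
    LinearMap.range ((rangeProj T) : H →ₗ[ℂ] H) = (LinearMap.range (T : H →ₗ[ℂ] H)).topologicalClosure :=
  range_projOf _

lemma rangeProj_eq_of_closure (T : H →L[ℂ] H) (U : Submodule ℂ H) [U.HasOrthogonalProjection]
    (h : (LinearMap.range (T : H →ₗ[ℂ] H)).topologicalClosure = U) :
    rangeProj T = U.subtypeL ∘L Submodule.orthogonalProjectionOnto U := by
  subst h; rfl

lemma rangeProj_le_rangeProj {T T' : H →L[ℂ] H}
    (h : (LinearMap.range (T : H →ₗ[ℂ] H)).topologicalClosure ≤ (LinearMap.range (T' : H →ₗ[ℂ] H)).topologicalClosure) :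
    rangeProj T ≤ rangeProj T' :=
  projOf_le_projOf h

/-- The range of a continuous idempotent is closed. -/
lemma isClosed_range_of_idem {P : H →L[ℂ] H} (hP : IsIdempotentElem P) :
    IsClosed ((LinearMap.range (P : H →ₗ[ℂ] H) : Submodule ℂ H) : Set H) := by
  have hs : ((LinearMap.range (P : H →ₗ[ℂ] H) : Submodule ℂ H) : Set H) = {x | P x = x} := by
    ext x
    constructor
    · rintro ⟨y, rfl⟩
      exact congrFun (congrArg DFunLike.coe hP) y
    · intro hx
      exact ⟨x, hx⟩
  rw [hs]
  exact isClosed_eq P.continuous continuous_id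

/-- Loewner order of selfadjoint idempotents implies range inclusion. -/
lemma range_le_range_of_le {P Q : H →L[ℂ] H} (hQ₁ : IsSelfAdjoint Q) (hQ₂ : IsIdempotentElem Q)
    (h : P ≤ Q) (hP : ∀ x, x ∈ LinearMap.range (P : H →ₗ[ℂ] H) → P x = x) :
    LinearMap.range (P : H →ₗ[ℂ] H) ≤ LinearMap.range (Q : H →ₗ[ℂ] H) := by
  intro z hz
  have hPz : P z = z := hP z hz
  have hsymm : ∀ x y : H, ⟪Q x, y⟫ = ⟪x, Q y⟫ := fun x y => by
    nth_rewrite 1 [← hQ₁.adjoint_eq]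
    exact ContinuousLinearMap.adjoint_inner_left Q y x
  have hQQ : ⟪Q z, z⟫ = ⟪Q z, Q z⟫ := by
    calc ⟪Q z, z⟫ = ⟪z, Q z⟫ := hsymm z z
    _ = ⟪z, Q (Q z)⟫ := by
        have : Q (Q z) = Q z := by
          have h2 := congrFun (congrArg DFunLike.coe hQ₂) z
          simpa [ContinuousLinearMap.mul_apply] using h2
        rw [this]
    _ = ⟪Q z, Q z⟫ := (hsymm z (Q z)).symm
  have hpos : 0 ≤ RCLike.re ⟪(Q - P) z, z⟫ :=
    ((ContinuousLinearMap.le_def P Q).mp h).re_inner_nonneg_left z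
  rw [ContinuousLinearMap.sub_apply, inner_sub_left, map_sub, hPz] at hpos
  have h1 : ‖z‖ ^ 2 ≤ ‖Q z‖ ^ 2 := by
    have hz2 : RCLike.re ⟪z, z⟫ = ‖z‖ ^ 2 := inner_self_eq_norm_sq z
    have hQ2 : RCLike.re ⟪Q z, z⟫ = ‖Q z‖ ^ 2 := by rw [hQQ]; exact inner_self_eq_norm_sq _
    linarith
  have horth : ⟪Q z, z - Q z⟫ = 0 := by rw [inner_sub_right, hQQ]; ring
  have hpyth : ‖z‖ ^ 2 = ‖Q z‖ ^ 2 + ‖z - Q z‖ ^ 2 := by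
    have := norm_add_sq_eq_norm_sq_add_norm_sq_of_inner_eq_zero (Q z) (z - Q z) horth
    simp only [add_sub_cancel] at this
    nlinarith [this]
  have : ‖z - Q z‖ ^ 2 ≤ 0 := by linarith
  have hzero : z - Q z = 0 := by
    have hn : ‖z - Q z‖ = 0 := by nlinarith [norm_nonneg (z - Q z)]
    exact norm_eq_zero.mp hn
  exact ⟨z, by show Q z = z; rw [← sub_eq_zero, ← neg_sub, hzero, neg_zero]⟩

lemma idem_fixed {P : H →L[ℂ] H} (hP : IsIdempotentElem P) :
    ∀ x ∈ LinearMap.range (P : H →ₗ[ℂ] H), P x = x := by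
  rintro x ⟨y, rfl⟩
  have h2 := congrFun (congrArg DFunLike.coe hP) y
  simpa [ContinuousLinearMap.mul_apply] using h2

lemma rangeProj_zero : rangeProj (0 : H →L[ℂ] H) = 0 := by
  have h0 : (LinearMap.range ((0 : H →L[ℂ] H) : H →ₗ[ℂ] H)).topologicalClosure = (⊥ : Submodule ℂ H) := by
    have h1 : (LinearMap.range ((0 : H →L[ℂ] H) : H →ₗ[ℂ] H)) = (⊥ : Submodule ℂ H) := by
      ext x; simp [eq_comm]
    rw [h1]
    exact IsClosed.submodule_topologicalClosure_eq (by
      rw [Submodule.bot_coe]; exact isClosed_singleton)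
  rw [rangeProj_eq_of_closure _ _ h0]
  ext x
  have := (Submodule.mem_bot ℂ).mp (Submodule.coe_mem (Submodule.orthogonalProjectionOnto (⊥ : Submodule ℂ H) x))
  simpa using this

lemma rangeProj_one : rangeProj (1 : H →L[ℂ] H) = 1 := by
  have h0 : (LinearMap.range ((1 : H →L[ℂ] H) : H →ₗ[ℂ] H)).topologicalClosure = (⊤ : Submodule ℂ H) := by
    have h1 : (LinearMap.range ((1 : H →L[ℂ] H) : H →ₗ[ℂ] H)) = (⊤ : Submodule ℂ H) := by
      ext x; simpa using ⟨x, rfl⟩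
    rw [h1]
    exact eq_top_iff.mpr (le_trans le_top (Submodule.le_topologicalClosure _))
  rw [rangeProj_eq_of_closure _ _ h0]
  ext x
  simpa using Submodule.starProjection_eq_self_iff.mpr (Submodule.mem_top (x := x))

lemma map_iInf_equiv (g : H ≃ₗ[ℂ] H) {ι : Sort*} (f : ι → Submodule ℂ H) :
    (⨅ i, (f i).map (g : H →ₗ[ℂ] H)) = (⨅ i, f i).map (g : H →ₗ[ℂ] H) := by
  have h := (map_iInf (Submodule.orderIsoMapComap g) f).symm
  simp only [Submodule.orderIsoMapComap_apply] at h
  exact h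

lemma map_iSup_equiv (g : H ≃ₗ[ℂ] H) {ι : Sort*} (f : ι → Submodule ℂ H) :
    (⨆ i, (f i).map (g : H →ₗ[ℂ] H)) = (⨆ i, f i).map (g : H →ₗ[ℂ] H) := by
  have h := (map_iSup (Submodule.orderIsoMapComap g) f).symm
  simp only [Submodule.orderIsoMapComap_apply] at h
  exact h

/-- If `{E λ}` is a bounded resolution of the identity and `S` is invertible,
then `{R(S⁻¹ (E λ) S)}` is again a bounded resolution of the identity. -/
theorem isBoundedResolutionOfIdentity_rangeProj_conj (E : ℝ → H →L[ℂ] H)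
    (hE : IsBoundedResolutionOfIdentity E) (S : H →L[ℂ] H) (hS : IsUnit S) :
    IsBoundedResolutionOfIdentity (fun l : ℝ => rangeProj (Ring.inverse S * E l * S)) := by
  obtain ⟨hE, a, ha0, ha1⟩ := hE
  set e : H ≃L[ℂ] H := ContinuousLinearEquiv.unitsEquiv ℂ H hS.unit with he
  have hSe : ∀ x, S x = e x := fun x => by
    simp [he, ContinuousLinearEquiv.unitsEquiv_apply, hS.unit_spec]
  have hSinv : (Ring.inverse S : H →L[ℂ] H) = (e.symm : H →L[ℂ] H) := by
    rw [← hS.unit_spec, Ring.inverse_unit]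
    rfl
  set g : H ≃ₗ[ℂ] H := e.symm.toLinearEquiv with hg
  have hgcoe : ∀ x, g x = e.symm x := fun _ => rfl
  have hghomeo : ∀ U : Submodule ℂ H, ((U.map (g : H →ₗ[ℂ] H) : Submodule ℂ H) : Set H)
      = ⇑e.symm.toHomeomorph '' (U : Set H) := fun _ => rfl
  clear_value g
  have hrange : ∀ l, LinearMap.range ((Ring.inverse S * E l * S : H →L[ℂ] H) : H →ₗ[ℂ] H)
      = (LinearMap.range ((E l) : H →ₗ[ℂ] H)).map (g : H →ₗ[ℂ] H) := by
    intro l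
    ext x
    constructor
    · rintro ⟨y, rfl⟩
      refine ⟨E l (S y), ⟨S y, rfl⟩, ?_⟩
      rw [LinearEquiv.coe_coe, hgcoe, hSinv]
      rfl
    · rintro ⟨z, ⟨y, rfl⟩, rfl⟩
      refine ⟨e.symm y, ?_⟩
      have hy : S (e.symm y) = y := by rw [hSe]; exact e.apply_symm_apply y
      show (Ring.inverse S) (E l (S (e.symm y))) = g (E l y)
      rw [hy, hSinv, hgcoe]
      rfl
  have hFclosed : ∀ l, IsClosed (((LinearMap.range ((E l) : H →ₗ[ℂ] H)).map (g : H →ₗ[ℂ] H) : Submodule ℂ H) : Set H) := by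
    intro l
    rw [hghomeo, Homeomorph.isClosed_image]
    exact isClosed_range_of_idem (hE.proj l).2
  have hclosure : ∀ l, (LinearMap.range ((Ring.inverse S * E l * S : H →L[ℂ] H) : H →ₗ[ℂ] H)).topologicalClosure
      = (LinearMap.range ((E l) : H →ₗ[ℂ] H)).map (g : H →ₗ[ℂ] H) := by
    intro l
    rw [hrange l]
    exact (hFclosed l).submodule_topologicalClosure_eq
  have hR : ∀ l, LinearMap.range (rangeProj ((Ring.inverse S * E l * S) : H →L[ℂ] H) : H →ₗ[ℂ] H)
      = (LinearMap.range ((E l) : H →ₗ[ℂ] H)).map (g : H →ₗ[ℂ] H) :=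
    fun l => (range_rangeProj _).trans (hclosure l)
  refine ⟨⟨fun l => ⟨rangeProj_isSelfAdjoint _, rangeProj_idem _⟩, ?_, ?_, ?_, ?_⟩, a, ?_, ?_⟩
  · -- iInf_bot
    simp only [hR]
    rw [map_iInf_equiv, hE.iInf_bot, Submodule.map_bot]
  · -- iSup_top
    simp only [hR]
    rw [map_iSup_equiv]
    have hclosure_map : ∀ U : Submodule ℂ H,
        (U.map (g : H →ₗ[ℂ] H)).topologicalClosure = U.topologicalClosure.map (g : H →ₗ[ℂ] H) := by
      intro U
      apply SetLike.coe_injective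
      rw [Submodule.topologicalClosure_coe, hghomeo, hghomeo, Submodule.topologicalClosure_coe]
      exact (e.symm.toHomeomorph.image_closure ((U : Submodule ℂ H) : Set H)).symm
    rw [hclosure_map, hE.iSup_top, Submodule.map_top]
    exact LinearMap.range_eq_top.mpr g.surjective
  · -- mono
    intro l l' hll'
    dsimp only
    apply rangeProj_le_rangeProj
    rw [hclosure l, hclosure l']
    exact Submodule.map_mono (range_le_range_of_le (hE.proj l').1 (hE.proj l').2
      (hE.mono hll') (idem_fixed (hE.proj l).2))
  · -- rightCont
    intro l
    simp only [hR]
    calc (LinearMap.range ((E l) : H →ₗ[ℂ] H)).map (g : H →ₗ[ℂ] H)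
        = (⨅ l' > l, LinearMap.range ((E l') : H →ₗ[ℂ] H)).map (g : H →ₗ[ℂ] H) := by rw [← hE.rightCont l]
      _ = ⨅ l', (⨅ _ : l' > l, LinearMap.range ((E l') : H →ₗ[ℂ] H)).map (g : H →ₗ[ℂ] H) := (map_iInf_equiv g _).symm
      _ = ⨅ l' > l, (LinearMap.range ((E l') : H →ₗ[ℂ] H)).map (g : H →ₗ[ℂ] H) :=
          iInf_congr fun l' => (map_iInf_equiv g _).symm
  · -- zero for small l
    intro l hl
    simp only [ha0 l hl, mul_zero, zero_mul, rangeProj_zero]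
  · -- one for large l
    intro l hl
    simp only [ha1 l hl, mul_one, Ring.inverse_mul_cancel S hS, rangeProj_one]
end
end
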